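/- A linear map f : 𝔥₆ → 𝔥₆ is an automorphism of 𝔥₆ if and only if its matrix in the basis e₁,…,e₆ has the block form ((A, 0), (M, Δ(A))), where A is a 4×4 matrix of the form with rows (r, 0, 0, 0), (x₁, ã₁₁, ã₁₂, 0), (x₂, ã₂₁, ã₂₂, 0), (z, y₁, y₂, s) with r ≠ 0, s ≠ 0 and the 2×2 block Ã = ((ã₁₁, ã₁₂), (ã₂₁, ã₂₂)) invertible, M is an arbitrary 2×4 real matrix, and Δ(A) = r·Ã. -/

import Mathlib

open Matrix

/-- The Lie bracket of the nilpotent Lie algebra 𝔥₆ = (0,0,0,0,12,13) in the basis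
e₁,…,e₆: the only nonzero brackets among basis vectors are [e₁,e₂] = -e₅ and
[e₁,e₃] = -e₆. -/
def h6bracket (x y : Fin 6 → ℝ) : Fin 6 → ℝ :=
  ![0, 0, 0, 0, -(x 0 * y 1 - x 1 * y 0), -(x 0 * y 2 - x 2 * y 0)]

/-- An automorphism of 𝔥₆, identified with its matrix in the basis e₁,…,e₆. -/
def IsAutH6 (f : Matrix (Fin 6) (Fin 6) ℝ) : Prop :=
  IsUnit f ∧ ∀ x y : Fin 6 → ℝ, f.mulVec (h6bracket x y) = h6bracket (f.mulVec x) (f.mulVec y)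

@[simp] lemma cv6_1 {α : Type*} (x : α) (u : Fin 5 → α) : vecCons x u 1 = u 0 := rfl
@[simp] lemma cv6_2 {α : Type*} (x : α) (u : Fin 5 → α) : vecCons x u 2 = u 1 := rfl
@[simp] lemma cv6_3 {α : Type*} (x : α) (u : Fin 5 → α) : vecCons x u 3 = u 2 := rfl
@[simp] lemma cv6_4 {α : Type*} (x : α) (u : Fin 5 → α) : vecCons x u 4 = u 3 := rfl
@[simp] lemma cv6_5 {α : Type*} (x : α) (u : Fin 5 → α) : vecCons x u 5 = u 4 := rfl
@[simp] lemma cv5_1 {α : Type*} (x : α) (u : Fin 4 → α) : vecCons x u 1 = u 0 := rfl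
@[simp] lemma cv5_2 {α : Type*} (x : α) (u : Fin 4 → α) : vecCons x u 2 = u 1 := rfl
@[simp] lemma cv5_3 {α : Type*} (x : α) (u : Fin 4 → α) : vecCons x u 3 = u 2 := rfl
@[simp] lemma cv5_4 {α : Type*} (x : α) (u : Fin 4 → α) : vecCons x u 4 = u 3 := rfl
@[simp] lemma cv4_1 {α : Type*} (x : α) (u : Fin 3 → α) : vecCons x u 1 = u 0 := rfl
@[simp] lemma cv4_2 {α : Type*} (x : α) (u : Fin 3 → α) : vecCons x u 2 = u 1 := rfl
@[simp] lemma cv4_3 {α : Type*} (x : α) (u : Fin 3 → α) : vecCons x u 3 = u 2 := rfl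
@[simp] lemma cv3_1 {α : Type*} (x : α) (u : Fin 2 → α) : vecCons x u 1 = u 0 := rfl
@[simp] lemma cv3_2 {α : Type*} (x : α) (u : Fin 2 → α) : vecCons x u 2 = u 1 := rfl
@[simp] lemma cv2_1 {α : Type*} (x : α) (u : Fin 1 → α) : vecCons x u 1 = u 0 := rfl

@[simp] lemma fcs5_0 : (Fin.castSucc (0 : Fin 5) : Fin 6) = 0 := rfl
@[simp] lemma fcs5_1 : (Fin.castSucc (1 : Fin 5) : Fin 6) = 1 := rfl
@[simp] lemma fcs5_2 : (Fin.castSucc (2 : Fin 5) : Fin 6) = 2 := rfl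
@[simp] lemma fcs5_3 : (Fin.castSucc (3 : Fin 5) : Fin 6) = 3 := rfl
@[simp] lemma fcs5_4 : (Fin.castSucc (4 : Fin 5) : Fin 6) = 4 := rfl
@[simp] lemma fcs4_0 : (Fin.castSucc (0 : Fin 4) : Fin 5) = 0 := rfl
@[simp] lemma fcs4_1 : (Fin.castSucc (1 : Fin 4) : Fin 5) = 1 := rfl
@[simp] lemma fcs4_2 : (Fin.castSucc (2 : Fin 4) : Fin 5) = 2 := rfl
@[simp] lemma fcs4_3 : (Fin.castSucc (3 : Fin 4) : Fin 5) = 3 := rfl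
@[simp] lemma fcs3_0 : (Fin.castSucc (0 : Fin 3) : Fin 4) = 0 := rfl
@[simp] lemma fcs3_1 : (Fin.castSucc (1 : Fin 3) : Fin 4) = 1 := rfl
@[simp] lemma fcs3_2 : (Fin.castSucc (2 : Fin 3) : Fin 4) = 2 := rfl
@[simp] lemma fcs2_0 : (Fin.castSucc (0 : Fin 2) : Fin 3) = 0 := rfl
@[simp] lemma fcs2_1 : (Fin.castSucc (1 : Fin 2) : Fin 3) = 1 := rfl
@[simp] lemma fcs1_0 : (Fin.castSucc (0 : Fin 1) : Fin 2) = 0 := rfl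

set_option maxHeartbeats 2000000 in
set_option maxRecDepth 20000 in
lemma det6block (a00 a01 a02 a03 a10 a11 a12 a13 a20 a21 a22 a23 a30 a31 a32 a33
    a40 a41 a42 a43 a50 a51 a52 a53 b44 b45 b54 b55 : ℝ) :
    (!![a00, a01, a02, a03, 0, 0;
        a10, a11, a12, a13, 0, 0;
        a20, a21, a22, a23, 0, 0;
        a30, a31, a32, a33, 0, 0;
        a40, a41, a42, a43, b44, b45;
        a50, a51, a52, a53, b54, b55] : Matrix (Fin 6) (Fin 6) ℝ).det =
      (a00*(a11*(a22*a33 - a23*a32) - a12*(a21*a33 - a23*a31) + a13*(a21*a32 - a22*a31))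
        - a01*(a10*(a22*a33 - a23*a32) - a12*(a20*a33 - a23*a30) + a13*(a20*a32 - a22*a30))
        + a02*(a10*(a21*a33 - a23*a31) - a11*(a20*a33 - a23*a30) + a13*(a20*a31 - a21*a30))
        - a03*(a10*(a21*a32 - a22*a31) - a11*(a20*a32 - a22*a30) + a12*(a20*a31 - a21*a30)))
      * (b44 * b55 - b45 * b54) := by
  simp [Matrix.det_succ_row_zero, Fin.sum_univ_succ, Fin.succAbove]
  ring

set_option maxHeartbeats 4000000 in
set_option maxRecDepth 20000 in
/-- Theorem 4.4: a linear map f is an automorphism of 𝔥₆ if and only if, in the basis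
e₁,…,e₆, it has the block form ((A, 0), (M, Δ(A))) where A is the 4×4 matrix with rows
(r,0,0,0), (x₁,ã₁₁,ã₁₂,0), (x₂,ã₂₁,ã₂₂,0), (z,y₁,y₂,s), with r ≠ 0, s ≠ 0, the 2×2
block Ã invertible, M an arbitrary 2×4 matrix, and Δ(A) = r·Ã. -/
theorem aut_h6_iff_block_form (f : Matrix (Fin 6) (Fin 6) ℝ) :
    IsAutH6 f ↔
      ∃ (r s x₁ x₂ z y₁ y₂ a₁₁ a₁₂ a₂₁ a₂₂ : ℝ) (M : Matrix (Fin 2) (Fin 4) ℝ),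
        r ≠ 0 ∧ s ≠ 0 ∧ a₁₁ * a₂₂ - a₁₂ * a₂₁ ≠ 0 ∧
        f = !![r, 0, 0, 0, 0, 0;
               x₁, a₁₁, a₁₂, 0, 0, 0;
               x₂, a₂₁, a₂₂, 0, 0, 0;
               z, y₁, y₂, s, 0, 0;
               M 0 0, M 0 1, M 0 2, M 0 3, r * a₁₁, r * a₁₂;
               M 1 0, M 1 1, M 1 2, M 1 3, r * a₂₁, r * a₂₂] := by
  constructor
  · rintro ⟨hu, hb⟩
    have h01 := hb ![1,0,0,0,0,0] ![0,1,0,0,0,0]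
    have h02 := hb ![1,0,0,0,0,0] ![0,0,1,0,0,0]
    have h12 := hb ![0,1,0,0,0,0] ![0,0,1,0,0,0]
    have h03 := hb ![1,0,0,0,0,0] ![0,0,0,1,0,0]
    have h13 := hb ![0,1,0,0,0,0] ![0,0,0,1,0,0]
    have h23 := hb ![0,0,1,0,0,0] ![0,0,0,1,0,0]
    have c40 := congrFun h01 0
    have c41 := congrFun h01 1
    have c42 := congrFun h01 2
    have c43 := congrFun h01 3
    have c44 := congrFun h01 4
    have c45 := congrFun h01 5
    have c50 := congrFun h02 0
    have c51 := congrFun h02 1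
    have c52 := congrFun h02 2
    have c53 := congrFun h02 3
    have c54 := congrFun h02 4
    have c55 := congrFun h02 5
    have r12a := congrFun h12 4
    have r12b := congrFun h12 5
    have r03a := congrFun h03 4
    have r03b := congrFun h03 5
    have r13a := congrFun h13 4
    have r13b := congrFun h13 5
    have r23a := congrFun h23 4
    have r23b := congrFun h23 5
    simp only [h6bracket, Matrix.mulVec, dotProduct, Fin.sum_univ_six,
      Matrix.cons_val_zero, cv6_1, cv6_2, cv6_3, cv6_4, cv6_5, cv5_1, cv5_2, cv5_3, cv5_4,
      cv4_1, cv4_2, cv4_3, cv3_1, cv3_2, cv2_1, mul_zero, mul_one, zero_mul, one_mul,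
      add_zero, zero_add, zero_sub, sub_zero, neg_zero, neg_eq_zero, neg_neg, neg_sub,
      mul_neg, sub_self] at c40 c41 c42 c43 c44 c45 c50 c51 c52 c53 c54 c55 r12a r12b r03a r03b r13a r13b r23a r23b
    -- c44 : f 4 4 = f 0 0 * f 1 1 - f 1 0 * f 0 1  (up to sign normalization)
    have c44' : f 4 4 = f 0 0 * f 1 1 - f 1 0 * f 0 1 := by linarith [c44]
    have c45' : f 5 4 = f 0 0 * f 2 1 - f 2 0 * f 0 1 := by linarith [c45]
    have c54' : f 4 5 = f 0 0 * f 1 2 - f 1 0 * f 0 2 := by linarith [c54]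
    have c55' : f 5 5 = f 0 0 * f 2 2 - f 2 0 * f 0 2 := by linarith [c55]
    have hE1 : f = !![f 0 0, f 0 1, f 0 2, f 0 3, 0, 0;
                      f 1 0, f 1 1, f 1 2, f 1 3, 0, 0;
                      f 2 0, f 2 1, f 2 2, f 2 3, 0, 0;
                      f 3 0, f 3 1, f 3 2, f 3 3, 0, 0;
                      f 4 0, f 4 1, f 4 2, f 4 3,
                        f 0 0 * f 1 1 - f 1 0 * f 0 1, f 0 0 * f 1 2 - f 1 0 * f 0 2;
                      f 5 0, f 5 1, f 5 2, f 5 3,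
                        f 0 0 * f 2 1 - f 2 0 * f 0 1, f 0 0 * f 2 2 - f 2 0 * f 0 2] := by
      ext i j
      fin_cases i <;> fin_cases j <;>
        simp [c40, c41, c42, c43, c50, c51, c52, c53, c44', c45', c54', c55']
    have hdetne : f.det ≠ 0 := by
      have h := (Matrix.isUnit_iff_isUnit_det f).mp hu
      exact h.ne_zero
    have hdet : f.det =
        (f 0 0*(f 1 1*(f 2 2*f 3 3 - f 2 3*f 3 2) - f 1 2*(f 2 1*f 3 3 - f 2 3*f 3 1)
            + f 1 3*(f 2 1*f 3 2 - f 2 2*f 3 1))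
          - f 0 1*(f 1 0*(f 2 2*f 3 3 - f 2 3*f 3 2) - f 1 2*(f 2 0*f 3 3 - f 2 3*f 3 0)
            + f 1 3*(f 2 0*f 3 2 - f 2 2*f 3 0))
          + f 0 2*(f 1 0*(f 2 1*f 3 3 - f 2 3*f 3 1) - f 1 1*(f 2 0*f 3 3 - f 2 3*f 3 0)
            + f 1 3*(f 2 0*f 3 1 - f 2 1*f 3 0))
          - f 0 3*(f 1 0*(f 2 1*f 3 2 - f 2 2*f 3 1) - f 1 1*(f 2 0*f 3 2 - f 2 2*f 3 0)
            + f 1 2*(f 2 0*f 3 1 - f 2 1*f 3 0))) *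
        (f 0 0 *
          (f 0 0*(f 1 1*f 2 2 - f 1 2*f 2 1) - f 0 1*(f 1 0*f 2 2 - f 1 2*f 2 0)
            + f 0 2*(f 1 0*f 2 1 - f 1 1*f 2 0))) := by
      conv_lhs => rw [hE1]
      rw [det6block]
      ring
    rw [hdet] at hdetne
    obtain ⟨hA4, h0D⟩ := mul_ne_zero_iff.mp hdetne
    obtain ⟨h00, hD⟩ := mul_ne_zero_iff.mp h0D
    have h01z : f 0 1 = 0 := by
      have key : f 0 1 *
          (f 0 0*(f 1 1*f 2 2 - f 1 2*f 2 1) - f 0 1*(f 1 0*f 2 2 - f 1 2*f 2 0)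
            + f 0 2*(f 1 0*f 2 1 - f 1 1*f 2 0)) = 0 := by
        linear_combination (f 0 1 * f 2 0 - f 0 0 * f 2 1) * r12a
          + (f 0 0 * f 1 1 - f 0 1 * f 1 0) * r12b
      exact (mul_eq_zero.mp key).resolve_right hD
    have h02z : f 0 2 = 0 := by
      have key : f 0 2 *
          (f 0 0*(f 1 1*f 2 2 - f 1 2*f 2 1) - f 0 1*(f 1 0*f 2 2 - f 1 2*f 2 0)
            + f 0 2*(f 1 0*f 2 1 - f 1 1*f 2 0)) = 0 := by
        linear_combination (f 0 2 * f 2 0 - f 0 0 * f 2 2) * r12a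
          + (f 0 0 * f 1 2 - f 0 2 * f 1 0) * r12b
      exact (mul_eq_zero.mp key).resolve_right hD
    have hD2 : f 1 1 * f 2 2 - f 1 2 * f 2 1 ≠ 0 := by
      intro h
      apply hD
      rw [h01z, h02z, h]
      ring
    have h03z : f 0 3 = 0 := by
      have key : f 0 3 * (f 1 1 * f 2 2 - f 1 2 * f 2 1) = 0 := by
        linear_combination (-(f 2 2)) * r13a + f 2 1 * r23a + (f 1 3 * f 2 2) * h01z
          + (-(f 1 3 * f 2 1)) * h02z
      exact (mul_eq_zero.mp key).resolve_right hD2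
    have h13z : f 1 3 = 0 := by
      have key : f 0 0 * f 1 3 = 0 := by linear_combination r03a + f 1 0 * h03z
      exact (mul_eq_zero.mp key).resolve_left h00
    have h23z : f 2 3 = 0 := by
      have key : f 0 0 * f 2 3 = 0 := by linear_combination r03b + f 2 0 * h03z
      exact (mul_eq_zero.mp key).resolve_left h00
    have h33 : f 3 3 ≠ 0 := by
      intro h
      apply hA4
      rw [h01z, h02z, h03z, h13z, h23z, h]
      ring
    refine ⟨f 0 0, f 3 3, f 1 0, f 2 0, f 3 0, f 3 1, f 3 2, f 1 1, f 1 2, f 2 1, f 2 2,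
      !![f 4 0, f 4 1, f 4 2, f 4 3; f 5 0, f 5 1, f 5 2, f 5 3], h00, h33, hD2, ?_⟩
    ext i j
    fin_cases i <;> fin_cases j <;>
      simp [c40, c41, c42, c43, c50, c51, c52, c53, c44', c45', c54', c55',
        h01z, h02z, h03z, h13z, h23z]
  · rintro ⟨r, s, x₁, x₂, z, y₁, y₂, a₁₁, a₁₂, a₂₁, a₂₂, M, hr, hs, ha, rfl⟩
    constructor
    · rw [Matrix.isUnit_iff_isUnit_det, isUnit_iff_ne_zero]
      have hdet : (!![r, 0, 0, 0, 0, 0;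
               x₁, a₁₁, a₁₂, 0, 0, 0;
               x₂, a₂₁, a₂₂, 0, 0, 0;
               z, y₁, y₂, s, 0, 0;
               M 0 0, M 0 1, M 0 2, M 0 3, r * a₁₁, r * a₁₂;
               M 1 0, M 1 1, M 1 2, M 1 3, r * a₂₁, r * a₂₂] :
            Matrix (Fin 6) (Fin 6) ℝ).det = r^3 * s * (a₁₁ * a₂₂ - a₁₂ * a₂₁)^2 := by
        rw [det6block]
        ring
      rw [hdet]
      exact mul_ne_zero (mul_ne_zero (pow_ne_zero _ hr) hs) (pow_ne_zero _ ha)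
    · intro x y
      funext i
      fin_cases i <;>
        simp [h6bracket, Matrix.mulVec, dotProduct, Fin.sum_univ_six] <;> ring
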